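/- Let 0 < a < 1, c = a/(1 + a²), and let r₁, r₂ ≥ 0 with r₁ + r₂ > 0. Then the function t ↦ Re f_{r₁,r₂}(t) is strictly decreasing on (0, π/2): if 0 < t₁ < t₂ < π/2 then Re f_{r₁,r₂}(t₂) < Re f_{r₁,r₂}(t₁). -/

import Mathlib

noncomputable section

/-- Principal-branch complex square root. -/
def csqrt (z : ℂ) : ℂ := z ^ ((1:ℂ)/2)

/-- The branch of `√(w² + 2c)` defined by
`√(w² + 2c) := i·√(−√(2c) − i w)·√(√(2c) − i w)` with principal-branch square roots. -/
def sqrtc (c : ℝ) (w : ℂ) : ℂ :=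
  Complex.I * csqrt (-(Real.sqrt (2*c) : ℂ) - Complex.I * w) *
    csqrt ((Real.sqrt (2*c) : ℂ) - Complex.I * w)

/-- `G(w) = (1/√(2c))·(w − √(w² + 2c))`. -/
def Gfun (c : ℝ) (w : ℂ) : ℂ := ((Real.sqrt (2*c) : ℂ))⁻¹ * (w - sqrtc c w)

/-- The saddle-point function
`f_{r₁,r₂}(t) = r₁·log(i⁻¹ G(i e^{it})) + r₂·log(i⁻¹ G(−i e^{−it}))`
with the principal branch of the complex logarithm. -/
def fsaddle (c r1 r2 t : ℝ) : ℂ :=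
  r1 * Complex.log (Complex.I⁻¹ * Gfun c (Complex.I * Complex.exp (Complex.I * t))) +
  r2 * Complex.log (Complex.I⁻¹ * Gfun c (-Complex.I * Complex.exp (-Complex.I * t)))

lemma csqrt_sq {z : ℂ} (hz : z ≠ 0) : csqrt z ^ 2 = z := by
  rw [csqrt, sq, ← Complex.cpow_add _ _ hz]
  norm_num

lemma csqrt_quadrant {z : ℂ} (hz : 0 < z.im) : 0 < (csqrt z).re ∧ 0 < (csqrt z).im := by
  have h0 : z ≠ 0 := fun h => by simp [h] at hz
  have h1 : 0 < z.arg := by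
    rcases (Complex.arg_nonneg_iff.2 hz.le).lt_or_eq with h | h
    · exact h
    · exact absurd ((Complex.arg_eq_zero_iff).1 h.symm).2 hz.ne'
  have h2 : z.arg < Real.pi := by
    rcases (Complex.arg_le_pi z).lt_or_eq with h | h
    · exact h
    · exact absurd ((Complex.arg_eq_pi_iff).1 h).2 hz.ne'
  have key : csqrt z = Complex.exp (Complex.log z * (1/2)) := Complex.cpow_def_of_ne_zero h0 _
  have him : (Complex.log z * (1/2 : ℂ)).im = z.arg / 2 := by
    have : (1/2 : ℂ) = ((1/2 : ℝ) : ℂ) := by norm_num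
    rw [this]
    simp [Complex.mul_im, Complex.log_im]
    ring
  constructor
  · rw [key, Complex.exp_re, him]
    have : 0 < Real.cos (z.arg / 2) := by
      apply Real.cos_pos_of_mem_Ioo
      constructor <;> [linarith [Real.pi_pos]; linarith]
    positivity
  · rw [key, Complex.exp_im, him]
    have : 0 < Real.sin (z.arg / 2) := Real.sin_pos_of_pos_of_lt_pi (by linarith) (by linarith [Real.pi_pos])
    positivity

def Xf (c t : ℝ) : ℝ := Real.sqrt (1 + (2*c)^2 - 2*(2*c)*Real.cos (2*t))
def Yf (c t : ℝ) : ℝ := 1 - (2*c)*Real.cos (2*t)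
def Ff (c t : ℝ) : ℝ := 1 + Xf c t + 2*Real.sqrt ((Xf c t + Yf c t)/2)

set_option maxHeartbeats 1000000 in
lemma absG1 (c : ℝ) (hc0 : 0 < c) (hc1 : c < 1/2) (t : ℝ) (ht0 : 0 < t) (ht2 : t < Real.pi/2) :
    ‖Complex.I⁻¹ * Gfun c (Complex.I * Complex.exp (Complex.I * t))‖
      = Real.sqrt (2*c) / Real.sqrt (Ff c t) := by
  have hpi := Real.pi_pos
  set s : ℝ := Real.sqrt (2*c) with hs
  have hs0 : 0 < s := Real.sqrt_pos.2 (by linarith)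
  have hs2 : s^2 = 2*c := Real.sq_sqrt (by linarith)
  have hs2c : ((s:ℂ))^2 = ((2*c : ℝ) : ℂ) := by push_cast [← hs2]; ring
  have hsint : 0 < Real.sin t := Real.sin_pos_of_pos_of_lt_pi ht0 (by linarith)
  have hcost : 0 < Real.cos t := Real.cos_pos_of_mem_Ioo ⟨by linarith, ht2⟩
  have hsin2t : 0 < Real.sin (2*t) := Real.sin_pos_of_pos_of_lt_pi (by linarith) (by linarith)
  set e : ℂ := Complex.exp (Complex.I * t) with he
  have heabs : ‖e‖ = 1 := by rw [he, Complex.norm_exp]; simp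
  have he0 : e ≠ 0 := Complex.exp_ne_zero _
  have here : e.re = Real.cos t := by rw [he, Complex.exp_re]; simp
  have heim : e.im = Real.sin t := by rw [he, Complex.exp_im]; simp
  have he2 : e^2 = Complex.exp (Complex.I * (2*t)) := by
    rw [he, sq, ← Complex.exp_add]; push_cast; ring_nf
  have hE2 : (e^2)⁻¹ = Complex.exp (-(Complex.I * (2*t))) := by
    rw [he2, ← Complex.exp_neg]
  have hE2re : ((e^2)⁻¹).re = Real.cos (2*t) := by rw [hE2, Complex.exp_re]; simp
  have hE2im : ((e^2)⁻¹).im = -Real.sin (2*t) := by rw [hE2, Complex.exp_im]; simp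
  set z₁ : ℂ := csqrt (e - (s:ℂ)) with hz₁
  set z₂ : ℂ := csqrt (e + (s:ℂ)) with hz₂
  have hb1 : 0 < (e - (s:ℂ)).im := by simpa [heim] using hsint
  have hb2 : 0 < (e + (s:ℂ)).im := by simpa [heim] using hsint
  have hq1 : 0 < z₁.re ∧ 0 < z₁.im := csqrt_quadrant hb1
  have hq2 : 0 < z₂.re ∧ 0 < z₂.im := csqrt_quadrant hb2
  have hz1sq : z₁^2 = e - (s:ℂ) := csqrt_sq (fun h => by simp [h] at hb1)
  have hz2sq : z₂^2 = e + (s:ℂ) := csqrt_sq (fun h => by simp [h] at hb2)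
  have hS : sqrtc c (Complex.I * e) = Complex.I * (z₁ * z₂) := by
    rw [sqrtc, ← hs]
    have h1 : -(s:ℂ) - Complex.I * (Complex.I * e) = e - s := by
      rw [← mul_assoc, Complex.I_mul_I]; ring
    have h2 : (s:ℂ) - Complex.I * (Complex.I * e) = e + s := by
      rw [← mul_assoc, Complex.I_mul_I]; ring
    rw [h1, h2, ← hz₁, ← hz₂, mul_assoc]
  simp only [Gfun]
  rw [hS, ← hs]
  clear_value z₁ z₂
  clear hz₁ hz₂ hb1 hb2
  set v : ℂ := e⁻¹ * (z₁ * z₂) with hv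
  have hev : e * v = z₁ * z₂ := by rw [hv]; field_simp
  have hv2 : v^2 = 1 - ((2*c:ℝ):ℂ) * (e^2)⁻¹ := by
    have h : v^2 = (e^2)⁻¹ * (z₁^2 * z₂^2) := by rw [hv]; field_simp
    rw [h, hz1sq, hz2sq]
    have h2 : (e - (s:ℂ)) * (e + (s:ℂ)) = e^2 - (s:ℂ)^2 := by ring
    rw [h2, hs2c]
    field_simp
  clear_value v
  have hure : (v^2).re = Yf c t := by
    rw [hv2, Yf]
    simp only [Complex.sub_re, Complex.one_re, Complex.mul_re, Complex.ofReal_re,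
      Complex.ofReal_im, hE2re, hE2im]
    ring
  have huim : (v^2).im = 2*c*Real.sin (2*t) := by
    rw [hv2]
    simp only [Complex.sub_im, Complex.one_im, Complex.mul_im, Complex.ofReal_re,
      Complex.ofReal_im, hE2re, hE2im]
    ring
  clear hv2 hv
  clear_value e
  clear he he2 hE2 hE2re hE2im
  have habsu : ‖v^2‖ = Xf c t := by
    rw [Complex.norm_def, Complex.normSq_apply, hure, huim, Xf]
    congr 1
    rw [Yf]
    nlinarith [Real.sin_sq_add_cos_sq (2*t)]
  have hexp_re : (v^2).re = v.re*v.re - v.im*v.im := by rw [sq, Complex.mul_re]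
  have hexp_im : (v^2).im = v.re*v.im + v.im*v.re := by rw [sq, Complex.mul_im]
  have hresq : v.re^2 - v.im^2 = Yf c t := by linear_combination hure - hexp_re
  have hXsum : v.re^2 + v.im^2 = Xf c t := by
    have h1 : ‖v‖^2 = v.re^2 + v.im^2 := by
      rw [Complex.sq_norm, Complex.normSq_apply]; ring
    have h2 : ‖v‖^2 = ‖v^2‖ := (norm_pow v 2).symm
    rw [← h1, h2, habsu]
  have hvprod : v.re * v.im = c * Real.sin (2*t) := by linear_combination (huim - hexp_im)/2
  have hzzim : 0 < (z₁ * z₂).im := by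
    rw [Complex.mul_im]
    have h1 := mul_pos hq1.1 hq2.2
    have h2 := mul_pos hq1.2 hq2.1
    linarith
  have hvre : 0 < v.re := by
    have hprodpos : 0 < v.re * v.im := by rw [hvprod]; positivity
    have hzz : (z₁*z₂).im = e.re * v.im + e.im * v.re := by rw [← hev, Complex.mul_im]
    rcases lt_trichotomy v.re 0 with h | h | h
    · have him : v.im < 0 := by nlinarith
      rw [hzz, here, heim] at hzzim
      have k1 : 0 < Real.cos t * (-v.im) := mul_pos hcost (by linarith)
      have k2 : 0 < Real.sin t * (-v.re) := mul_pos hsint (by linarith)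
      nlinarith
    · rw [h] at hprodpos; simp at hprodpos
    · exact h
  have hvre_eq : v.re = Real.sqrt ((Xf c t + Yf c t)/2) := by
    have h : (Xf c t + Yf c t)/2 = v.re^2 := by linarith
    rw [h, Real.sqrt_sq hvre.le]
  have hprod : (Complex.I*e - Complex.I*(z₁*z₂)) * (Complex.I*e + Complex.I*(z₁*z₂))
      = -(((2*c:ℝ)):ℂ) := by
    have h : (Complex.I*e - Complex.I*(z₁*z₂)) * (Complex.I*e + Complex.I*(z₁*z₂))
        = Complex.I^2 * (e^2 - z₁^2 * z₂^2) := by ring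
    rw [h, Complex.I_sq, hz1sq, hz2sq]
    have h2 : (e - (s:ℂ)) * (e + (s:ℂ)) = e^2 - (s:ℂ)^2 := by ring
    rw [h2, hs2c]; ring
  have hFpos : 0 < Ff c t := by
    have h1 : 0 ≤ Xf c t := Real.sqrt_nonneg _
    have h2 : 0 ≤ Real.sqrt ((Xf c t + Yf c t)/2) := Real.sqrt_nonneg _
    rw [Ff]; linarith
  have habsden : ‖Complex.I*e + Complex.I*(z₁*z₂)‖ = Real.sqrt (Ff c t) := by
    have h : Complex.I*e + Complex.I*(z₁*z₂) = Complex.I * e * (1 + v) := by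
      rw [mul_add, mul_one, mul_assoc, hev]
    rw [h, norm_mul, norm_mul, Complex.norm_I, heabs, one_mul, one_mul]
    rw [Complex.norm_def, Complex.normSq_apply]
    have h1 : (1+v).re = 1 + v.re := by simp
    have h2 : (1+v).im = v.im := by simp
    rw [h1, h2, Ff, ← hvre_eq]
    congr 1
    linear_combination hXsum
  have hdenpos : 0 < Real.sqrt (Ff c t) := Real.sqrt_pos.2 hFpos
  have habsnum : ‖Complex.I*e - Complex.I*(z₁*z₂)‖ = 2*c / Real.sqrt (Ff c t) := by
    have h := congrArg norm hprod
    rw [norm_mul, habsden, norm_neg, Complex.norm_real, Real.norm_eq_abs,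
      abs_of_pos (by linarith : (0:ℝ) < 2*c)] at h
    field_simp at h ⊢
    linarith
  rw [norm_mul, norm_mul, norm_inv, norm_inv, Complex.norm_I, Complex.norm_real, Real.norm_eq_abs,
    abs_of_pos hs0, inv_one, one_mul, habsnum]
  have h2cs : 2*c = s*s := by linear_combination -hs2
  rw [h2cs]
  field_simp

set_option maxHeartbeats 1000000 in
lemma absG2 (c : ℝ) (hc0 : 0 < c) (hc1 : c < 1/2) (t : ℝ) (ht0 : 0 < t) (ht2 : t < Real.pi/2) :
    ‖Complex.I⁻¹ * Gfun c (-Complex.I * Complex.exp (-Complex.I * t))‖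
      = Real.sqrt (2*c) / Real.sqrt (Ff c t) := by
  have hpi := Real.pi_pos
  set s : ℝ := Real.sqrt (2*c) with hs
  have hs0 : 0 < s := Real.sqrt_pos.2 (by linarith)
  have hs2 : s^2 = 2*c := Real.sq_sqrt (by linarith)
  have hs2c : ((s:ℂ))^2 = ((2*c : ℝ) : ℂ) := by rw [← hs2]; push_cast; ring
  have hsint : 0 < Real.sin t := Real.sin_pos_of_pos_of_lt_pi ht0 (by linarith)
  have hcost : 0 < Real.cos t := Real.cos_pos_of_mem_Ioo ⟨by linarith, ht2⟩
  have hsin2t : 0 < Real.sin (2*t) := Real.sin_pos_of_pos_of_lt_pi (by linarith) (by linarith)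
  set e : ℂ := Complex.exp (-Complex.I * t) with he
  have heabs : ‖e‖ = 1 := by rw [he, Complex.norm_exp]; simp
  have he0 : e ≠ 0 := Complex.exp_ne_zero _
  have here : e.re = Real.cos t := by rw [he, Complex.exp_re]; simp
  have heim : e.im = -Real.sin t := by rw [he, Complex.exp_im]; simp
  have he2 : e^2 = Complex.exp (-(Complex.I * (2*t))) := by
    rw [he, sq, ← Complex.exp_add]; ring_nf
  have hE2 : (e^2)⁻¹ = Complex.exp (Complex.I * (2*t)) := by
    rw [he2, ← Complex.exp_neg]; ring_nf
  have hE2re : ((e^2)⁻¹).re = Real.cos (2*t) := by rw [hE2, Complex.exp_re]; simp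
  have hE2im : ((e^2)⁻¹).im = Real.sin (2*t) := by rw [hE2, Complex.exp_im]; simp
  set z₁ : ℂ := csqrt (-(s:ℂ) - e) with hz₁
  set z₂ : ℂ := csqrt ((s:ℂ) - e) with hz₂
  have hb1 : 0 < (-(s:ℂ) - e).im := by simp [heim]; linarith
  have hb2 : 0 < ((s:ℂ) - e).im := by simp [heim]; linarith
  have hq1 : 0 < z₁.re ∧ 0 < z₁.im := csqrt_quadrant hb1
  have hq2 : 0 < z₂.re ∧ 0 < z₂.im := csqrt_quadrant hb2
  have hz1sq : z₁^2 = -(s:ℂ) - e := csqrt_sq (fun h => by simp [h] at hb1)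
  have hz2sq : z₂^2 = (s:ℂ) - e := csqrt_sq (fun h => by simp [h] at hb2)
  have hS : sqrtc c (-Complex.I * e) = Complex.I * (z₁ * z₂) := by
    rw [sqrtc, ← hs]
    have h1 : -(s:ℂ) - Complex.I * (-Complex.I * e) = -(s:ℂ) - e := by
      have : Complex.I * (-Complex.I * e) = e := by
        rw [← mul_assoc, mul_neg, Complex.I_mul_I]; ring
      rw [this]
    have h2 : (s:ℂ) - Complex.I * (-Complex.I * e) = (s:ℂ) - e := by
      have : Complex.I * (-Complex.I * e) = e := by
        rw [← mul_assoc, mul_neg, Complex.I_mul_I]; ring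
      rw [this]
    rw [h1, h2, ← hz₁, ← hz₂, mul_assoc]
  simp only [Gfun]
  rw [hS, ← hs]
  clear_value z₁ z₂
  clear hz₁ hz₂ hb1 hb2
  set v : ℂ := e⁻¹ * (z₁ * z₂) with hv
  have hev : e * v = z₁ * z₂ := by rw [hv]; field_simp
  have hv2 : v^2 = 1 - ((2*c:ℝ):ℂ) * (e^2)⁻¹ := by
    have h : v^2 = (e^2)⁻¹ * (z₁^2 * z₂^2) := by rw [hv]; field_simp
    rw [h, hz1sq, hz2sq]
    have h2 : (-(s:ℂ) - e) * ((s:ℂ) - e) = e^2 - (s:ℂ)^2 := by ring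
    rw [h2, hs2c]
    field_simp
  clear_value v
  have hure : (v^2).re = Yf c t := by
    rw [hv2, Yf]
    simp only [Complex.sub_re, Complex.one_re, Complex.mul_re, Complex.ofReal_re,
      Complex.ofReal_im, hE2re, hE2im]
    ring
  have huim : (v^2).im = -(2*c*Real.sin (2*t)) := by
    rw [hv2]
    simp only [Complex.sub_im, Complex.one_im, Complex.mul_im, Complex.ofReal_re,
      Complex.ofReal_im, hE2re, hE2im]
    ring
  clear hv2 hv
  clear_value e
  clear he he2 hE2 hE2re hE2im
  have habsu : ‖v^2‖ = Xf c t := by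
    rw [Complex.norm_def, Complex.normSq_apply, hure, huim, Xf]
    congr 1
    rw [Yf]
    nlinarith [Real.sin_sq_add_cos_sq (2*t)]
  have hexp_re : (v^2).re = v.re*v.re - v.im*v.im := by rw [sq, Complex.mul_re]
  have hexp_im : (v^2).im = v.re*v.im + v.im*v.re := by rw [sq, Complex.mul_im]
  have hresq : v.re^2 - v.im^2 = Yf c t := by linear_combination hure - hexp_re
  have hXsum : v.re^2 + v.im^2 = Xf c t := by
    have h1 : ‖v‖^2 = v.re^2 + v.im^2 := by
      rw [Complex.sq_norm, Complex.normSq_apply]; ring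
    have h2 : ‖v‖^2 = ‖v^2‖ := (norm_pow v 2).symm
    rw [← h1, h2, habsu]
  have hvprod : v.re * v.im = -(c * Real.sin (2*t)) := by linear_combination (huim - hexp_im)/2
  have hzzim : 0 < (z₁ * z₂).im := by
    rw [Complex.mul_im]
    have h1 := mul_pos hq1.1 hq2.2
    have h2 := mul_pos hq1.2 hq2.1
    linarith
  have hvre : v.re < 0 := by
    have hprodneg : v.re * v.im < 0 := by
      rw [hvprod]
      have : 0 < c * Real.sin (2*t) := by positivity
      linarith
    have hzz : (z₁*z₂).im = e.re * v.im + e.im * v.re := by rw [← hev, Complex.mul_im]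
    rcases lt_trichotomy v.re 0 with h | h | h
    · exact h
    · rw [h] at hprodneg; simp at hprodneg
    · have him : v.im < 0 := by nlinarith
      rw [hzz, here, heim] at hzzim
      have k1 : 0 < Real.cos t * (-v.im) := mul_pos hcost (by linarith)
      have k2 : 0 < Real.sin t * v.re := mul_pos hsint h
      nlinarith
  have hvre_eq : v.re = -Real.sqrt ((Xf c t + Yf c t)/2) := by
    have h : (Xf c t + Yf c t)/2 = (-v.re)^2 := by nlinarith
    rw [h, Real.sqrt_sq (by linarith)]
    ring
  have hprod : (-Complex.I*e - Complex.I*(z₁*z₂)) * (-Complex.I*e + Complex.I*(z₁*z₂))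
      = -(((2*c:ℝ)):ℂ) := by
    have h : (-Complex.I*e - Complex.I*(z₁*z₂)) * (-Complex.I*e + Complex.I*(z₁*z₂))
        = Complex.I^2 * (e^2 - z₁^2 * z₂^2) := by ring
    rw [h, Complex.I_sq, hz1sq, hz2sq]
    have h2 : (-(s:ℂ) - e) * ((s:ℂ) - e) = e^2 - (s:ℂ)^2 := by ring
    rw [h2, hs2c]; ring
  have hFpos : 0 < Ff c t := by
    have h1 : 0 ≤ Xf c t := Real.sqrt_nonneg _
    have h2 : 0 ≤ Real.sqrt ((Xf c t + Yf c t)/2) := Real.sqrt_nonneg _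
    rw [Ff]; linarith
  have habsden : ‖-Complex.I*e + Complex.I*(z₁*z₂)‖ = Real.sqrt (Ff c t) := by
    have h : -Complex.I*e + Complex.I*(z₁*z₂) = Complex.I * e * (v - 1) := by
      rw [mul_sub, mul_one, mul_assoc, hev]; ring
    rw [h, norm_mul, norm_mul, Complex.norm_I, heabs, one_mul, one_mul]
    rw [Complex.norm_def, Complex.normSq_apply]
    have h1 : (v-1).re = v.re - 1 := by simp
    have h2 : (v-1).im = v.im := by simp
    have h3 : Real.sqrt ((Xf c t + Yf c t)/2) = -v.re := by rw [hvre_eq]; ring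
    rw [h1, h2, Ff, h3]
    congr 1
    linear_combination hXsum
  have hdenpos : 0 < Real.sqrt (Ff c t) := Real.sqrt_pos.2 hFpos
  have habsnum : ‖-Complex.I*e - Complex.I*(z₁*z₂)‖ = 2*c / Real.sqrt (Ff c t) := by
    have h := congrArg norm hprod
    rw [norm_mul, habsden, norm_neg, Complex.norm_real, Real.norm_eq_abs,
      abs_of_pos (by linarith : (0:ℝ) < 2*c)] at h
    field_simp at h ⊢
    linarith
  rw [norm_mul, norm_mul, norm_inv, norm_inv, Complex.norm_I, Complex.norm_real, Real.norm_eq_abs,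
    abs_of_pos hs0, inv_one, one_mul, habsnum]
  have h2cs : 2*c = s*s := by linear_combination -hs2
  rw [h2cs]
  field_simp

lemma fsaddle_re (c : ℝ) (hc0 : 0 < c) (hc1 : c < 1/2) (r1 r2 t : ℝ)
    (ht0 : 0 < t) (ht2 : t < Real.pi/2) :
    (fsaddle c r1 r2 t).re
      = (r1+r2) * Real.log (Real.sqrt (2*c) / Real.sqrt (Ff c t)) := by
  rw [fsaddle, Complex.add_re, Complex.re_ofReal_mul, Complex.re_ofReal_mul,
    Complex.log_re, Complex.log_re, absG1 c hc0 hc1 t ht0 ht2, absG2 c hc0 hc1 t ht0 ht2]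
  ring

lemma Ff_mono (c : ℝ) (hc0 : 0 < c) (hc1 : c < 1/2) (t₁ t₂ : ℝ)
    (ht₁ : 0 < t₁) (ht : t₁ < t₂) (ht₂ : t₂ < Real.pi/2) :
    Ff c t₁ < Ff c t₂ := by
  have hpi := Real.pi_pos
  have hcos : Real.cos (2*t₂) < Real.cos (2*t₁) :=
    Real.cos_lt_cos_of_nonneg_of_le_pi (by linarith) (by linarith) (by linarith)
  have hin1 : (0:ℝ) ≤ 1 + (2*c)^2 - 2*(2*c)*Real.cos (2*t₁) := by
    nlinarith [Real.cos_le_one (2*t₁), sq_nonneg (1-2*c)]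
  have hX : Xf c t₁ < Xf c t₂ := by
    apply Real.sqrt_lt_sqrt hin1
    nlinarith
  have hY : Yf c t₁ < Yf c t₂ := by
    rw [Yf, Yf]; nlinarith
  have hXY1 : (0:ℝ) ≤ (Xf c t₁ + Yf c t₁)/2 := by
    have h1 : 0 ≤ Xf c t₁ := Real.sqrt_nonneg _
    have h2 : 0 < Yf c t₁ := by
      rw [Yf]; nlinarith [Real.cos_le_one (2*t₁)]
    linarith
  have hsq : Real.sqrt ((Xf c t₁ + Yf c t₁)/2) < Real.sqrt ((Xf c t₂ + Yf c t₂)/2) := by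
    apply Real.sqrt_lt_sqrt hXY1
    linarith
  rw [Ff, Ff]; linarith

theorem stmt13 (a c : ℝ) (ha0 : 0 < a) (ha1 : a < 1) (hc : c = a/(1+a^2))
    (r1 r2 : ℝ) (hr1 : 0 ≤ r1) (hr2 : 0 ≤ r2) (hr : 0 < r1 + r2)
    (t₁ t₂ : ℝ) (ht₁ : 0 < t₁) (ht : t₁ < t₂) (ht₂ : t₂ < Real.pi/2) :
    (fsaddle c r1 r2 t₂).re < (fsaddle c r1 r2 t₁).re := by
  have hden : (0:ℝ) < 1 + a^2 := by positivity
  have hc0 : 0 < c := by rw [hc]; positivity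
  have hc1 : c < 1/2 := by
    rw [hc, div_lt_iff₀ hden]
    nlinarith [sq_nonneg (1-a)]
  have ht₁' : t₁ < Real.pi/2 := lt_trans ht ht₂
  have ht₂' : 0 < t₂ := lt_trans ht₁ ht
  rw [fsaddle_re c hc0 hc1 r1 r2 t₁ ht₁ ht₁', fsaddle_re c hc0 hc1 r1 r2 t₂ ht₂' ht₂]
  have hF := Ff_mono c hc0 hc1 t₁ t₂ ht₁ ht ht₂
  have hF1pos : 0 < Ff c t₁ := by
    have h1 : 0 ≤ Xf c t₁ := Real.sqrt_nonneg _
    have h2 : 0 ≤ Real.sqrt ((Xf c t₁ + Yf c t₁)/2) := Real.sqrt_nonneg _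
    rw [Ff]; linarith
  have hs0 : 0 < Real.sqrt (2*c) := Real.sqrt_pos.2 (by linarith)
  have hsF1 : 0 < Real.sqrt (Ff c t₁) := Real.sqrt_pos.2 hF1pos
  have hsF : Real.sqrt (Ff c t₁) < Real.sqrt (Ff c t₂) := Real.sqrt_lt_sqrt hF1pos.le hF
  have hdiv : Real.sqrt (2*c) / Real.sqrt (Ff c t₂) < Real.sqrt (2*c) / Real.sqrt (Ff c t₁) :=
    div_lt_div_of_pos_left hs0 hsF1 hsF
  have hlog : Real.log (Real.sqrt (2*c) / Real.sqrt (Ff c t₂))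
      < Real.log (Real.sqrt (2*c) / Real.sqrt (Ff c t₁)) := by
    apply Real.log_lt_log _ hdiv
    exact div_pos hs0 (Real.sqrt_pos.2 (lt_trans hF1pos hF))
  exact mul_lt_mul_of_pos_left hlog hr

end
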